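/- Let F be an r-sort species admitting a composition operator Η, and let Ω1, Ω2, Ω3, Ω4 be pairwise componentwise-disjoint r-tuples of finite sets. Then every Η-bracketing of F[Ω1], F[Ω2], F[Ω3], F[Ω4] equals the intersection of the seven sets η(F[Ω1⨿Ω2]×F[Ω3⨿Ω4]), η(F[Ω1⨿Ω3]×F[Ω2⨿Ω4]), η(F[Ω2⨿Ω3]×F[Ω1⨿Ω4]), η(F[Ω1]×F[Ω2⨿Ω3⨿Ω4]), η(F[Ω2]×F[Ω1⨿Ω3⨿Ω4]), η(F[Ω3]×F[Ω1⨿Ω2⨿Ω4]), and η(F[Ω4]×F[Ω1⨿Ω2⨿Ω3]). -/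

import Mathlib

open scoped Classical

noncomputable section

/-- Objects of `Set^r`: `r`-tuples of finite sets (realized as finite subsets of `ℕ`). -/
abbrev Obj (r : ℕ) := Fin r → Finset ℕ

variable {r : ℕ}

/-- The `r`-tuple of empty sets. -/
def oEmpty (r : ℕ) : Obj r := fun _ => ∅

/-- Componentwise union (the disjoint union `⨿` when the arguments are
componentwise disjoint). -/
def oUnion (Ω₁ Ω₂ : Obj r) : Obj r := fun i => Ω₁ i ∪ Ω₂ i

/-- Componentwise intersection. -/
def oInter (Ω₁ Ω₂ : Obj r) : Obj r := fun i => Ω₁ i ∩ Ω₂ i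

/-- Componentwise set difference. -/
def oDiff (Ω₁ Ω₂ : Obj r) : Obj r := fun i => Ω₁ i \ Ω₂ i

/-- Componentwise disjointness. -/
def oDisj (Ω₁ Ω₂ : Obj r) : Prop := ∀ i, Disjoint (Ω₁ i) (Ω₂ i)

/-- Componentwise containment. -/
def oSub (Ω₁ Ω₂ : Obj r) : Prop := ∀ i, Ω₁ i ⊆ Ω₂ i

/-- A morphism of `Set^r`: an `r`-tuple of bijections between the components. -/
def Mor (Ω₁ Ω₂ : Obj r) : Type := ∀ i, {x // x ∈ Ω₁ i} ≃ {x // x ∈ Ω₂ i}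

/-- The identity morphism. -/
def idMor (Ω : Obj r) : Mor Ω Ω := fun _ => Equiv.refl _

/-- Composition of morphisms. -/
def compMor {Ω₁ Ω₂ Ω₃ : Obj r} (f : Mor Ω₁ Ω₂) (g : Mor Ω₂ Ω₃) : Mor Ω₁ Ω₃ :=
  fun i => (f i).trans (g i)

/-- An `r`-sort species: a (covariant) functor from `Set^r` to the category of
finite sets and bijections.  The value `F[Ω]` is the finite set `obj Ω`, and the
action on a morphism `f` is encoded by the function `map f : ℕ → ℕ` (only its
values on `obj Ω₁` are relevant). -/
structure Species (r : ℕ) where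
  obj : Obj r → Finset ℕ
  map : ∀ {Ω₁ Ω₂ : Obj r}, Mor Ω₁ Ω₂ → ℕ → ℕ
  map_mem : ∀ {Ω₁ Ω₂ : Obj r} (f : Mor Ω₁ Ω₂), ∀ x ∈ obj Ω₁, map f x ∈ obj Ω₂
  map_id : ∀ (Ω : Obj r), ∀ x ∈ obj Ω, map (idMor Ω) x = x
  map_comp : ∀ {Ω₁ Ω₂ Ω₃ : Obj r} (f : Mor Ω₁ Ω₂) (g : Mor Ω₂ Ω₃), ∀ x ∈ obj Ω₁,
    map (compMor f g) x = map g (map f x)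

/-- The canonical identification of a disjoint union `s ∪ t` with the sum `s ⊕ t`. -/
def finsetSumEquiv {s t : Finset ℕ} (h : Disjoint s t) :
    {x // x ∈ s ∪ t} ≃ {x // x ∈ s} ⊕ {x // x ∈ t} :=
  (Equiv.subtypeEquivRight (fun x => by simp)).trans
    (Equiv.Set.union (s := (↑s : Set ℕ)) (t := (↑t : Set ℕ)) (by exact_mod_cast h))

/-- The disjoint union of two bijections, as a bijection between unions. -/
def finsetUnionEquiv {s t s' t' : Finset ℕ} (h : Disjoint s t) (h' : Disjoint s' t')
    (f : {x // x ∈ s} ≃ {x // x ∈ s'}) (g : {x // x ∈ t} ≃ {x // x ∈ t'}) :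
    {x // x ∈ s ∪ t} ≃ {x // x ∈ s' ∪ t'} :=
  (finsetSumEquiv h).trans ((f.sumCongr g).trans (finsetSumEquiv h').symm)

/-- The disjoint union `f ⨿ g` of two morphisms of `Set^r`. -/
def morUnion {Ω₁ Ω₂ Ω₁' Ω₂' : Obj r} (h : oDisj Ω₁ Ω₂) (h' : oDisj Ω₁' Ω₂')
    (f : Mor Ω₁ Ω₁') (g : Mor Ω₂ Ω₂') : Mor (oUnion Ω₁ Ω₂) (oUnion Ω₁' Ω₂') :=
  fun i => finsetUnionEquiv (h i) (h' i) (f i) (g i)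

/-- A composition operator `Η` for the species `F`: a natural transformation from
`F × F` (on pairs of componentwise disjoint objects) to `F ∘ ⨿` with injective
components, satisfying Axiom (D1). -/
structure CompOp {r : ℕ} (F : Species r) where
  η : Obj r → Obj r → ℕ × ℕ → ℕ
  mem_η : ∀ {Ω₁ Ω₂ : Obj r}, oDisj Ω₁ Ω₂ → ∀ x ∈ F.obj Ω₁, ∀ y ∈ F.obj Ω₂,
    η Ω₁ Ω₂ (x, y) ∈ F.obj (oUnion Ω₁ Ω₂)
  inj_η : ∀ {Ω₁ Ω₂ : Obj r}, oDisj Ω₁ Ω₂ →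
    Set.InjOn (η Ω₁ Ω₂) ((F.obj Ω₁ : Set ℕ) ×ˢ (F.obj Ω₂ : Set ℕ))
  natural : ∀ {Ω₁ Ω₂ Ω₁' Ω₂' : Obj r} (h : oDisj Ω₁ Ω₂) (h' : oDisj Ω₁' Ω₂')
    (f : Mor Ω₁ Ω₁') (g : Mor Ω₂ Ω₂'), ∀ x ∈ F.obj Ω₁, ∀ y ∈ F.obj Ω₂,
    F.map (morUnion h h' f g) (η Ω₁ Ω₂ (x, y)) = η Ω₁' Ω₂' (F.map f x, F.map g y)
  D1 : ∀ {Ω₁ Ω₂ Ω₃ Ω₄ : Obj r}, oDisj Ω₁ Ω₂ → oDisj Ω₃ Ω₄ →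
    oUnion Ω₁ Ω₂ = oUnion Ω₃ Ω₄ →
    η Ω₁ Ω₂ '' ((F.obj Ω₁ : Set ℕ) ×ˢ (F.obj Ω₂ : Set ℕ)) ∩
      η Ω₃ Ω₄ '' ((F.obj Ω₃ : Set ℕ) ×ˢ (F.obj Ω₄ : Set ℕ)) =
    η Ω₁ Ω₂ ''
      ((η (oInter Ω₁ Ω₃) (oInter Ω₁ Ω₄) ''
          ((F.obj (oInter Ω₁ Ω₃) : Set ℕ) ×ˢ (F.obj (oInter Ω₁ Ω₄) : Set ℕ))) ×ˢ
        (η (oInter Ω₂ Ω₃) (oInter Ω₂ Ω₄) ''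
          ((F.obj (oInter Ω₂ Ω₃) : Set ℕ) ×ˢ (F.obj (oInter Ω₂ Ω₄) : Set ℕ))))

/-- The set `F_Η[Ω]` of indecomposable elements of `F[Ω]`. -/
def indec (F : Species r) (E : CompOp F) (Ω : Obj r) : Set ℕ :=
  if Ω = oEmpty r then ∅
  else (F.obj Ω : Set ℕ) \
    ⋃ (p : Obj r × Obj r) (_ : oDisj p.1 p.2) (_ : p.1 ≠ oEmpty r) (_ : p.2 ≠ oEmpty r)
      (_ : oUnion p.1 p.2 = Ω),
      E.η p.1 p.2 '' ((F.obj p.1 : Set ℕ) ×ˢ (F.obj p.2 : Set ℕ))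

/-- The sets `F_Η^(k)[Ω]` of elements of `F[Ω]` consisting of exactly `k`
indecomposable components. -/
def indecK (F : Species r) (E : CompOp F) : ℕ → Obj r → Set ℕ
  | 0 => fun Ω => if Ω = oEmpty r then (F.obj (oEmpty r) : Set ℕ) else ∅
  | (k + 1) => fun Ω => ⋃ (Ω₁ : Obj r) (_ : oSub Ω₁ Ω),
      E.η Ω₁ (oDiff Ω Ω₁) '' ((indec F E Ω₁) ×ˢ (indecK F E k (oDiff Ω Ω₁)))

/-- `Ω_I`: the componentwise disjoint union of the family `Ωs` over the index set `s`. -/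
def bigU {ι : Type} [DecidableEq ι] (Ωs : ι → Obj r) (s : Finset ι) : Obj r :=
  fun i => s.biUnion (fun j => Ωs j i)

/-- `Brack F E Ωs leaf s B` says that `B` is an `Η`-bracketing of the sets
`leaf (Ωs i)`, `i ∈ s` (each occurring exactly once).  For `leaf Ω = F[Ω]` this is an
`Η`-bracketing of the `F[Ωs i]`; for `leaf = indec F E` it is an `Η`-bracketing of
the `F_Η[Ωs i]`. -/
inductive Brack (F : Species r) (E : CompOp F) {ι : Type} [DecidableEq ι]
    (Ωs : ι → Obj r) (leaf : Obj r → Set ℕ) : Finset ι → Set ℕ → Prop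
  | single (i : ι) : Brack F E Ωs leaf {i} (leaf (Ωs i))
  | node {s t : Finset ι} {B₁ B₂ : Set ℕ} :
      Disjoint s t → s.Nonempty → t.Nonempty →
      Brack F E Ωs leaf s B₁ → Brack F E Ωs leaf t B₂ →
      Brack F E Ωs leaf (s ∪ t) (E.η (bigU Ωs s) (bigU Ωs t) '' (B₁ ×ˢ B₂))

/-- A `Λ`-weight on `(F, Η)`: Axioms (W0), (W1), (W2). -/
structure Weight {r : ℕ} (F : Species r) (E : CompOp F) (Λ : Type) [CommRing Λ]
    [Algebra ℚ Λ] where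
  w : Obj r → ℕ → Λ
  W0 : ∀ x ∈ F.obj (oEmpty r), w (oEmpty r) x = 1
  W1 : ∀ {Ω Ω' : Obj r} (f : Mor Ω Ω'), ∀ x ∈ F.obj Ω, w Ω' (F.map f x) = w Ω x
  W2 : ∀ {Ω₁ Ω₂ : Obj r}, oDisj Ω₁ Ω₂ → ∀ x ∈ indec F E Ω₁, ∀ y ∈ F.obj Ω₂,
    w (oUnion Ω₁ Ω₂) (E.η Ω₁ Ω₂ (x, y)) = w Ω₁ x * w Ω₂ y

/-- The standard object `([n₁], …, [n_r])`, with `[n] = {1, …, n}`. -/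
def stdObj {r : ℕ} (n : Fin r → ℕ) : Obj r := fun i => Finset.Icc 1 (n i)

/-- The exponential generating function
`Σ_{n₁,…,n_r ≥ 0} Σ_{x ∈ S[([n₁],…,[n_r])]} w(x) z₁^{n₁} ⋯ z_r^{n_r}/(n₁! ⋯ n_r!)`
of a subfamily `S` of a species `F`, with respect to a weight `w`. -/
def GF {r : ℕ} {Λ : Type} [CommRing Λ] [Algebra ℚ Λ] (F : Species r)
    (S : Obj r → Set ℕ) (w : Obj r → ℕ → Λ) : MvPowerSeries (Fin r) Λ :=
  fun d => (algebraMap ℚ Λ (∏ i, (1 / (Nat.factorial (d i)) : ℚ))) *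
    ∑ x ∈ (F.obj (stdObj fun i => d i)).filter (fun x => x ∈ S (stdObj fun i => d i)),
      w (stdObj fun i => d i) x

/-- The exponential `exp f = Σ_{k ≥ 0} f^k / k!` of a multivariate formal power
series `f` with zero constant term (the coefficient of a given monomial only
receives contributions from `k` at most the total degree). -/
def mvExp {σ Λ : Type} [CommRing Λ] [Algebra ℚ Λ] (f : MvPowerSeries σ Λ) :
    MvPowerSeries σ Λ :=
  fun d => ∑ k ∈ Finset.range ((d.sum fun _ m => m) + 1),
    algebraMap ℚ Λ ((1 : ℚ) / (Nat.factorial k)) * MvPowerSeries.coeff d (f ^ k)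

/-- The logarithm `log f = Σ_{k ≥ 1} (-1)^{k+1} (f-1)^k / k` of a multivariate
formal power series `f` with constant term `1`. -/
def mvLog {σ Λ : Type} [CommRing Λ] [Algebra ℚ Λ] (f : MvPowerSeries σ Λ) :
    MvPowerSeries σ Λ :=
  fun d => ∑ k ∈ Finset.Icc 1 (d.sum fun _ m => m),
    algebraMap ℚ Λ ((-1 : ℚ) ^ (k + 1) / k) * MvPowerSeries.coeff d ((f - 1) ^ k)

/-- The refined generating function `G̃F_F(z₁,…,z_r,y)`, a power series in
`z₁, …, z_r` with coefficients that are polynomials in `y` (recorded via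
`Polynomial Λ`, the variable `y` being `Polynomial.X`):
`Σ_{n₁,…,n_r ≥ 0} Σ_k Σ_{x ∈ F_Η^(k)[([n₁],…,[n_r])]} y^k w(x) z₁^{n₁}⋯z_r^{n_r}/(n₁!⋯n_r!)`
(for fixed `n₁, …, n_r` only the `k ≤ n₁ + ⋯ + n_r` contribute, since
`F_Η^(k)[Ω] = ∅ for k > ‖Ω‖`). -/
def tGF {r : ℕ} {Λ : Type} [CommRing Λ] [Algebra ℚ Λ] (F : Species r) (E : CompOp F)
    (w : Obj r → ℕ → Λ) : MvPowerSeries (Fin r) (Polynomial Λ) :=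
  fun d => Polynomial.C (algebraMap ℚ Λ (∏ i, (1 / (Nat.factorial (d i)) : ℚ))) *
    ∑ k ∈ Finset.range ((∑ i, d i) + 1), Polynomial.X ^ k *
      Polynomial.C (∑ x ∈ (F.obj (stdObj fun i => d i)).filter
          (fun x => x ∈ indecK F E k (stdObj fun i => d i)),
        w (stdObj fun i => d i) x)

/-- The species `E(F_Η)` of sets of `F_Η`-structures:  `E(F_Η)[Ω]` consists of all
finite sets `{(x₁,Ω₁),…,(x_k,Ω_k)}` with `x_i ∈ F_Η[Ω_i]`, the `Ω_i` nonempty and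
pairwise componentwise disjoint, and `Ω₁ ⨿ ⋯ ⨿ Ω_k = Ω`. -/
def ESet {r : ℕ} (F : Species r) (E : CompOp F) (Ω : Obj r) :
    Set (Finset (ℕ × Obj r)) :=
  { s | (∀ p ∈ s, p.1 ∈ indec F E p.2 ∧ p.2 ≠ oEmpty r) ∧
        (∀ p ∈ s, ∀ q ∈ s, p ≠ q → oDisj p.2 q.2) ∧
        (∀ i, Ω i = s.biUnion (fun p => p.2 i)) }

/-- The bijection between a finite set and its image under a map injective on it. -/
def imageEquiv {u : Finset ℕ} (g : ℕ → ℕ) (hg : Set.InjOn g (u : Set ℕ)) :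
    {x // x ∈ u} ≃ {x // x ∈ u.image g} :=
  Equiv.ofBijective (fun x => ⟨g x, Finset.mem_image_of_mem g x.2⟩) (by
    constructor
    · rintro ⟨a, ha⟩ ⟨b, hb⟩ hab
      exact Subtype.ext (hg (by exact_mod_cast ha) (by exact_mod_cast hb)
        (congrArg Subtype.val hab))
    · rintro ⟨y, hy⟩
      rcases Finset.mem_image.mp hy with ⟨a, ha, rfl⟩
      exact ⟨⟨a, ha⟩, rfl⟩)

/-- The underlying function `ℕ → ℕ` of the `i`-th component of a morphism. -/
def apMor {Ω Ω' : Obj r} (f : Mor Ω Ω') (i : Fin r) (a : ℕ) : ℕ :=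
  if h : a ∈ Ω i then ((f i) ⟨a, h⟩ : ℕ) else a

/-- The componentwise image of a subobject `O ⊆ Ω` under a morphism `f : Ω → Ω'`. -/
def oImage {Ω Ω' : Obj r} (f : Mor Ω Ω') (O : Obj r) : Obj r :=
  fun i => (O i).image (apMor f i)

/-- The restriction of a morphism `f : Ω → Ω'` to a subobject `O ⊆ Ω`. -/
def restrictMor {Ω Ω' : Obj r} (f : Mor Ω Ω') {O : Obj r} (hO : oSub O Ω) :
    Mor O (oImage f O) :=
  fun i => imageEquiv (apMor f i) (by
    intro a ha b hb hab
    have ha' : a ∈ Ω i := hO i (by exact_mod_cast ha)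
    have hb' : b ∈ Ω i := hO i (by exact_mod_cast hb)
    have h1 : ((f i) ⟨a, ha'⟩ : ℕ) = ((f i) ⟨b, hb'⟩ : ℕ) := by
      simpa [apMor, dif_pos ha', dif_pos hb'] using hab
    have h2 := (f i).injective (Subtype.ext h1)
    exact congrArg Subtype.val h2)

/-- The induced action of a morphism `f : Ω → Ω'` on `E(F_Η)[Ω]`. -/
def Emap {r : ℕ} (F : Species r) {Ω Ω' : Obj r} (f : Mor Ω Ω')
    (s : Finset (ℕ × Obj r)) : Finset (ℕ × Obj r) :=
  s.image (fun p =>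
    if h : oSub p.2 Ω then (F.map (restrictMor f h) p.1, oImage f p.2) else p)

section Aux

variable {r : ℕ}

lemma oDisj_symm {A B : Obj r} (h : oDisj A B) : oDisj B A := fun i => (h i).symm

lemma oDisj_empty_left (A : Obj r) : oDisj (oEmpty r) A := fun i => by
  simp [oEmpty]

lemma oDisj_empty_right (A : Obj r) : oDisj A (oEmpty r) := fun i => by
  simp [oEmpty]

lemma oDisj_union_left {A B C : Obj r} (h1 : oDisj A C) (h2 : oDisj B C) :
    oDisj (oUnion A B) C := fun i => Finset.disjoint_union_left.mpr ⟨h1 i, h2 i⟩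

lemma oDisj_union_right {A B C : Obj r} (h1 : oDisj A B) (h2 : oDisj A C) :
    oDisj A (oUnion B C) := fun i => Finset.disjoint_union_right.mpr ⟨h1 i, h2 i⟩

lemma oUnion_empty_left (A : Obj r) : oUnion (oEmpty r) A = A :=
  funext fun i => Finset.empty_union _

lemma oUnion_empty_right (A : Obj r) : oUnion A (oEmpty r) = A :=
  funext fun i => Finset.union_empty _

lemma oUnion_comm (A B : Obj r) : oUnion A B = oUnion B A :=
  funext fun i => Finset.union_comm _ _

lemma oUnion_assoc (A B C : Obj r) : oUnion (oUnion A B) C = oUnion A (oUnion B C) :=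
  funext fun i => Finset.union_assoc _ _ _

lemma oInter_self (A : Obj r) : oInter A A = A := funext fun i => Finset.inter_self _

lemma oInter_disj {A B : Obj r} (h : oDisj A B) : oInter A B = oEmpty r :=
  funext fun i => Finset.disjoint_iff_inter_eq_empty.mp (h i)

/-- The set `η(F[X] × F[Y])`. -/
def Simg {r : ℕ} (F : Species r) (E : CompOp F) (X Y : Obj r) : Set ℕ :=
  E.η X Y '' ((F.obj X : Set ℕ) ×ˢ (F.obj Y : Set ℕ))

variable {F : Species r}

lemma Simg_sub (E : CompOp F) {X Y : Obj r} (h : oDisj X Y) :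
    Simg F E X Y ⊆ (F.obj (oUnion X Y) : Set ℕ) := by
  rintro _ ⟨⟨x, y⟩, ⟨hx, hy⟩, rfl⟩
  exact E.mem_η h x hx y hy

lemma ne_union (E : CompOp F) {X Y : Obj r} (h : oDisj X Y) (hX : (F.obj X).Nonempty)
    (hY : (F.obj Y).Nonempty) : (F.obj (oUnion X Y)).Nonempty := by
  obtain ⟨x, hx⟩ := hX; obtain ⟨y, hy⟩ := hY
  exact ⟨E.η X Y (x, y), E.mem_η h x hx y hy⟩

lemma Simg_nonempty (E : CompOp F) {X Y : Obj r} (hX : (F.obj X).Nonempty)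
    (hY : (F.obj Y).Nonempty) : (Simg F E X Y).Nonempty := by
  obtain ⟨x, hx⟩ := hX; obtain ⟨y, hy⟩ := hY
  exact ⟨E.η X Y (x, y), ⟨(x, y), ⟨hx, hy⟩, rfl⟩⟩

end Aux

section Aux2

variable {r : ℕ} {F : Species r}

lemma ne_empty (E : CompOp F) (hF : ∃ Ω : Obj r, (F.obj Ω).Nonempty) :
    (F.obj (oEmpty r)).Nonempty := by
  obtain ⟨Ω, x, hx⟩ := hF
  set N := (Finset.univ.sup (fun i : Fin r => (Ω i).sup id)) + 1 with hN
  have hbound : ∀ i, ∀ a ∈ Ω i, a < N := by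
    intro i a ha
    have h1 : a ≤ (Ω i).sup id := Finset.le_sup (f := id) ha
    have h2 : (Ω i).sup id ≤ Finset.univ.sup (fun i : Fin r => (Ω i).sup id) :=
      Finset.le_sup (f := fun i : Fin r => (Ω i).sup id) (Finset.mem_univ i)
    omega
  have hdj : oDisj Ω (fun i => (Ω i).image (· + N)) := by
    intro i
    rw [Finset.disjoint_left]
    intro a ha hb
    obtain ⟨b, hb2, hba⟩ := Finset.mem_image.mp hb
    have hba' : b + N = a := hba
    have h3 := hbound i b hb2
    have h4 := hbound i a ha
    omega
  have f : Mor Ω (fun i => (Ω i).image (· + N)) := fun i => imageEquiv (· + N)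
    (fun a _ b _ h => by have h' : a + N = b + N := h; omega)
  have hx' : F.map f x ∈ F.obj (fun i => (Ω i).image (· + N)) := F.map_mem f x hx
  have hD := E.D1 hdj hdj rfl
  rw [oInter_self, oInter_disj hdj, oInter_disj (oDisj_symm hdj), oInter_self] at hD
  have hmem : E.η Ω (fun i => (Ω i).image (· + N)) (x, F.map f x) ∈
      E.η Ω (fun i => (Ω i).image (· + N)) '' ((F.obj Ω : Set ℕ) ×ˢ (F.obj (fun i => (Ω i).image (· + N)) : Set ℕ)) :=
    ⟨(x, F.map f x), ⟨hx, hx'⟩, rfl⟩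
  have : E.η Ω (fun i => (Ω i).image (· + N)) (x, F.map f x) ∈ _ := hD ▸ (Set.mem_inter hmem hmem)
  obtain ⟨⟨u, v⟩, ⟨hu, -⟩, -⟩ := this
  obtain ⟨⟨p, q⟩, ⟨-, hq⟩, -⟩ := hu
  exact ⟨q, hq⟩

lemma unit_left (E : CompOp F) {A : Obj r} (h0 : (F.obj (oEmpty r)).Nonempty)
    (hA : (F.obj A).Nonempty) :
    E.η (oEmpty r) A '' ((F.obj (oEmpty r) : Set ℕ) ×ˢ (F.obj A : Set ℕ)) =
      (F.obj A : Set ℕ) := by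
  have hd : oDisj (oEmpty r) A := oDisj_empty_left A
  have hD := E.D1 hd hd rfl
  rw [oInter_self, oInter_disj hd, oInter_disj (oDisj_symm hd), oInter_self,
    Set.inter_self] at hD
  have hXsub : E.η (oEmpty r) (oEmpty r) ''
      ((F.obj (oEmpty r) : Set ℕ) ×ˢ (F.obj (oEmpty r) : Set ℕ)) ⊆
      (F.obj (oEmpty r) : Set ℕ) := by
    have := Simg_sub E (oDisj_empty_left (oEmpty r))
    rwa [oUnion_empty_right, Simg] at this
  have hYsub : E.η (oEmpty r) A '' ((F.obj (oEmpty r) : Set ℕ) ×ˢ (F.obj A : Set ℕ)) ⊆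
      (F.obj A : Set ℕ) := by
    have := Simg_sub E hd
    rwa [oUnion_empty_left, Simg] at this
  have hprodeq := ((E.inj_η hd).image_eq_image_iff subset_rfl
    (Set.prod_mono hXsub hYsub)).mp hD
  obtain ⟨x0, hx0⟩ := h0
  ext y
  constructor
  · intro hy; exact hYsub hy
  · intro hy
    have : ((x0 : ℕ), y) ∈ ((F.obj (oEmpty r) : Set ℕ) ×ˢ (F.obj A : Set ℕ)) :=
      ⟨by exact_mod_cast hx0, hy⟩
    rw [hprodeq] at this
    exact this.2

lemma unit_right (E : CompOp F) {A : Obj r} (h0 : (F.obj (oEmpty r)).Nonempty)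
    (hA : (F.obj A).Nonempty) :
    E.η A (oEmpty r) '' ((F.obj A : Set ℕ) ×ˢ (F.obj (oEmpty r) : Set ℕ)) =
      (F.obj A : Set ℕ) := by
  have hd : oDisj A (oEmpty r) := oDisj_empty_right A
  have hD := E.D1 hd hd rfl
  rw [oInter_self, oInter_disj hd, oInter_disj (oDisj_symm hd), oInter_self,
    Set.inter_self] at hD
  have hXsub : E.η A (oEmpty r) '' ((F.obj A : Set ℕ) ×ˢ (F.obj (oEmpty r) : Set ℕ)) ⊆
      (F.obj A : Set ℕ) := by
    have := Simg_sub E hd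
    rwa [oUnion_empty_right, Simg] at this
  have hYsub : E.η (oEmpty r) (oEmpty r) ''
      ((F.obj (oEmpty r) : Set ℕ) ×ˢ (F.obj (oEmpty r) : Set ℕ)) ⊆
      (F.obj (oEmpty r) : Set ℕ) := by
    have := Simg_sub E (oDisj_empty_left (oEmpty r))
    rwa [oUnion_empty_right, Simg] at this
  have hprodeq := ((E.inj_η hd).image_eq_image_iff subset_rfl
    (Set.prod_mono hXsub hYsub)).mp hD
  obtain ⟨x0, hx0⟩ := h0
  ext y
  constructor
  · intro hy; exact hXsub hy
  · intro hy
    have : (y, (x0 : ℕ)) ∈ ((F.obj A : Set ℕ) ×ˢ (F.obj (oEmpty r) : Set ℕ)) :=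
      ⟨hy, by exact_mod_cast hx0⟩
    rw [hprodeq] at this
    exact this.1

lemma Scomm (E : CompOp F) {A B : Obj r} (hAB : oDisj A B)
    (h0 : (F.obj (oEmpty r)).Nonempty) (hA : (F.obj A).Nonempty)
    (hB : (F.obj B).Nonempty) : Simg F E A B = Simg F E B A := by
  have key : ∀ X Y : Obj r, oDisj X Y → (F.obj X).Nonempty → (F.obj Y).Nonempty →
      Simg F E X Y ⊆ Simg F E Y X := by
    intro X Y hd hX hY
    have hD := E.D1 hd (oDisj_symm hd) (oUnion_comm X Y)
    rw [oInter_disj hd, oInter_self, oInter_self, oInter_disj (oDisj_symm hd),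
      unit_left E h0 hX, unit_right E h0 hY] at hD
    have hsub : Simg F E X Y ⊆ Simg F E X Y ∩ Simg F E Y X := by
      simp only [Simg]; rw [hD]
    exact fun x hx => (hsub hx).2
  exact Set.Subset.antisymm (key A B hAB hA hB) (key B A (oDisj_symm hAB) hB hA)

lemma mix (E : CompOp F) (A B C D : Obj r) (hAB : oDisj A B) (hAC : oDisj A C)
    (hAD : oDisj A D) (hBC : oDisj B C) (hBD : oDisj B D) (hCD : oDisj C D) :
    Simg F E (oUnion A B) (oUnion C D) ∩ Simg F E (oUnion A C) (oUnion B D) =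
      E.η (oUnion A B) (oUnion C D) '' (Simg F E A B ×ˢ Simg F E C D) := by
  have h12 : oDisj (oUnion A B) (oUnion C D) :=
    oDisj_union_left (oDisj_union_right hAC hAD) (oDisj_union_right hBC hBD)
  have h34 : oDisj (oUnion A C) (oUnion B D) :=
    oDisj_union_left (oDisj_union_right hAB hAD)
      (oDisj_union_right (oDisj_symm hBC) hCD)
  have huv : oUnion (oUnion A B) (oUnion C D) = oUnion (oUnion A C) (oUnion B D) := by
    funext i; ext a; simp only [oUnion, Finset.mem_union]; tauto
  have e1 : oInter (oUnion A B) (oUnion A C) = A := by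
    funext i; ext a
    have h : a ∈ B i → a ∉ C i := fun hb => Finset.disjoint_left.mp (hBC i) hb
    simp [oInter, oUnion]; tauto
  have e2 : oInter (oUnion A B) (oUnion B D) = B := by
    funext i; ext a
    have h : a ∈ A i → a ∉ D i := fun hb => Finset.disjoint_left.mp (hAD i) hb
    simp [oInter, oUnion]; tauto
  have e3 : oInter (oUnion C D) (oUnion A C) = C := by
    funext i; ext a
    have h : a ∈ A i → a ∉ D i := fun hb => Finset.disjoint_left.mp (hAD i) hb
    simp [oInter, oUnion]; tauto
  have e4 : oInter (oUnion C D) (oUnion B D) = D := by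
    funext i; ext a
    have h : a ∈ B i → a ∉ C i := fun hb => Finset.disjoint_left.mp (hBC i) hb
    simp [oInter, oUnion]; tauto
  have hD := E.D1 h12 h34 huv
  rw [e1, e2, e3, e4] at hD
  simp only [Simg]
  exact hD

end Aux2

section Aux3

variable {r : ℕ} {F : Species r}

lemma Simg_empty_left (E : CompOp F) {A : Obj r} (h0 : (F.obj (oEmpty r)).Nonempty)
    (hA : (F.obj A).Nonempty) : Simg F E (oEmpty r) A = (F.obj A : Set ℕ) := by
  rw [Simg]; exact unit_left E h0 hA

lemma Simg_empty_right (E : CompOp F) {A : Obj r} (h0 : (F.obj (oEmpty r)).Nonempty)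
    (hA : (F.obj A).Nonempty) : Simg F E A (oEmpty r) = (F.obj A : Set ℕ) := by
  rw [Simg]; exact unit_right E h0 hA

lemma img_inter (E : CompOp F) {X Y : Obj r} (h : oDisj X Y) {U V : Set (ℕ × ℕ)}
    (hU : U ⊆ (F.obj X : Set ℕ) ×ˢ (F.obj Y : Set ℕ))
    (hV : V ⊆ (F.obj X : Set ℕ) ×ˢ (F.obj Y : Set ℕ)) :
    E.η X Y '' (U ∩ V) = E.η X Y '' U ∩ E.η X Y '' V :=
  (E.inj_η h).image_inter hU hV

lemma prod_inter_right {s t₁ t₂ : Set ℕ} :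
    s ×ˢ (t₁ ∩ t₂) = s ×ˢ t₁ ∩ s ×ˢ t₂ := by
  rw [Set.prod_inter_prod, Set.inter_self]

lemma prod_inter_left {s₁ s₂ t : Set ℕ} :
    (s₁ ∩ s₂) ×ˢ t = s₁ ×ˢ t ∩ s₂ ×ˢ t := by
  rw [Set.prod_inter_prod, Set.inter_self]

/-- The intersection of the three splits of a 3-element family. -/
def Tset (F : Species r) (E : CompOp F) (A B C : Obj r) : Set ℕ :=
  Simg F E A (oUnion B C) ∩ Simg F E B (oUnion A C) ∩ Simg F E C (oUnion A B)

/-- The intersection of the seven splits of a 4-element family. -/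
def Jset (F : Species r) (E : CompOp F) (A B C D : Obj r) : Set ℕ :=
  Simg F E A (oUnion B (oUnion C D)) ∩ Simg F E B (oUnion A (oUnion C D)) ∩
  Simg F E C (oUnion A (oUnion B D)) ∩ Simg F E D (oUnion A (oUnion B C)) ∩
  Simg F E (oUnion A B) (oUnion C D) ∩ Simg F E (oUnion A C) (oUnion B D) ∩
  Simg F E (oUnion A D) (oUnion B C)

lemma L12 (E : CompOp F) (A B C : Obj r) (hAB : oDisj A B) (hAC : oDisj A C)
    (hBC : oDisj B C) (h0 : (F.obj (oEmpty r)).Nonempty) (hA : (F.obj A).Nonempty)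
    (hB : (F.obj B).Nonempty) (hC : (F.obj C).Nonempty) :
    E.η A (oUnion B C) '' ((F.obj A : Set ℕ) ×ˢ Simg F E B C) = Tset F E A B C := by
  have h1 := mix E (oEmpty r) A B C (oDisj_empty_left _) (oDisj_empty_left _)
    (oDisj_empty_left _) hAB hAC hBC
  rw [oUnion_empty_left A, oUnion_empty_left B, Simg_empty_left E h0 hA] at h1
  have h2 := mix E (oEmpty r) A C B (oDisj_empty_left _) (oDisj_empty_left _)
    (oDisj_empty_left _) hAC hAB (oDisj_symm hBC)
  rw [oUnion_empty_left A, oUnion_empty_left C, Simg_empty_left E h0 hA,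
    oUnion_comm C B, Scomm E (oDisj_symm hBC) h0 hC hB] at h2
  rw [Tset]
  ext x
  constructor
  · rintro hx
    have a1 : x ∈ Simg F E A (oUnion B C) ∩ Simg F E B (oUnion A C) := by rw [h1]; exact hx
    have a2 : x ∈ Simg F E A (oUnion B C) ∩ Simg F E C (oUnion A B) := by rw [h2]; exact hx
    exact ⟨⟨a1.1, a1.2⟩, a2.2⟩
  · rintro ⟨⟨hx1, hx2⟩, hx3⟩
    rw [← h1]; exact ⟨hx1, hx2⟩

lemma L21 (E : CompOp F) (A B C : Obj r) (hAB : oDisj A B) (hAC : oDisj A C)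
    (hBC : oDisj B C) (h0 : (F.obj (oEmpty r)).Nonempty) (hA : (F.obj A).Nonempty)
    (hB : (F.obj B).Nonempty) (hC : (F.obj C).Nonempty) :
    E.η (oUnion A B) C '' (Simg F E A B ×ˢ (F.obj C : Set ℕ)) = Tset F E A B C := by
  have h1 := mix E A B C (oEmpty r) hAB hAC (oDisj_empty_right _) hBC
    (oDisj_empty_right _) (oDisj_empty_right _)
  rw [oUnion_empty_right C, oUnion_empty_right B, Simg_empty_right E h0 hC] at h1
  have h2 := mix E B A C (oEmpty r) (oDisj_symm hAB) hBC (oDisj_empty_right _) hAC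
    (oDisj_empty_right _) (oDisj_empty_right _)
  rw [oUnion_empty_right C, oUnion_empty_right A, Simg_empty_right E h0 hC,
    oUnion_comm B A, Scomm E (oDisj_symm hAB) h0 hB hA] at h2
  have c1 : Simg F E (oUnion A B) C = Simg F E C (oUnion A B) :=
    Scomm E (oDisj_union_left hAC hBC) h0 (ne_union E hAB hA hB) hC
  have c2 : Simg F E (oUnion A C) B = Simg F E B (oUnion A C) :=
    Scomm E (oDisj_union_left hAB (oDisj_symm hBC)) h0
      (ne_union E hAC hA hC) hB
  have c3 : Simg F E (oUnion B C) A = Simg F E A (oUnion B C) :=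
    Scomm E (oDisj_union_left (oDisj_symm hAB) (oDisj_symm hAC)) h0
      (ne_union E hBC hB hC) hA
  rw [c1, c2] at h1
  rw [c1, c3] at h2
  rw [Tset]
  ext x
  constructor
  · rintro hx
    have a1 : x ∈ Simg F E C (oUnion A B) ∩ Simg F E B (oUnion A C) := by rw [h1]; exact hx
    have a2 : x ∈ Simg F E C (oUnion A B) ∩ Simg F E A (oUnion B C) := by rw [h2]; exact hx
    exact ⟨⟨a2.2, a1.2⟩, a1.1⟩
  · rintro ⟨⟨hx1, hx2⟩, hx3⟩
    rw [← h1]; exact ⟨hx3, hx2⟩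

end Aux3

section Aux4

variable {r : ℕ} {F : Species r}

lemma L13 (E : CompOp F) (A B C D : Obj r) (hAB : oDisj A B) (hAC : oDisj A C)
    (hAD : oDisj A D) (hBC : oDisj B C) (hBD : oDisj B D) (hCD : oDisj C D)
    (h0 : (F.obj (oEmpty r)).Nonempty) (hA : (F.obj A).Nonempty)
    (hB : (F.obj B).Nonempty) (hC : (F.obj C).Nonempty) (hD : (F.obj D).Nonempty) :
    E.η A (oUnion B (oUnion C D)) '' ((F.obj A : Set ℕ) ×ˢ Tset F E B C D) =
      Jset F E A B C D := by
  have dB_CD : oDisj B (oUnion C D) := oDisj_union_right hBC hBD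
  have dC_BD : oDisj C (oUnion B D) := oDisj_union_right (oDisj_symm hBC) hCD
  have dD_BC : oDisj D (oUnion B C) := oDisj_union_right (oDisj_symm hBD) (oDisj_symm hCD)
  have dA_CD : oDisj A (oUnion C D) := oDisj_union_right hAC hAD
  have dA_BD : oDisj A (oUnion B D) := oDisj_union_right hAB hAD
  have dA_BC : oDisj A (oUnion B C) := oDisj_union_right hAB hAC
  have dA_BCD : oDisj A (oUnion B (oUnion C D)) := oDisj_union_right hAB dA_CD
  have eQ : oUnion C (oUnion B D) = oUnion B (oUnion C D) := by
    funext i; ext a; simp only [oUnion, Finset.mem_union]; tauto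
  have eR : oUnion D (oUnion B C) = oUnion B (oUnion C D) := by
    funext i; ext a; simp only [oUnion, Finset.mem_union]; tauto
  have sP : Simg F E B (oUnion C D) ⊆ (F.obj (oUnion B (oUnion C D)) : Set ℕ) :=
    Simg_sub E dB_CD
  have sQ : Simg F E C (oUnion B D) ⊆ (F.obj (oUnion B (oUnion C D)) : Set ℕ) := by
    have := Simg_sub E dC_BD; rwa [eQ] at this
  have sR : Simg F E D (oUnion B C) ⊆ (F.obj (oUnion B (oUnion C D)) : Set ℕ) := by
    have := Simg_sub E dD_BC; rwa [eR] at this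
  rw [Tset, prod_inter_right, prod_inter_right,
    img_inter E dA_BCD
      (Set.inter_subset_left.trans (Set.prod_mono subset_rfl sP))
      (Set.prod_mono subset_rfl sR),
    img_inter E dA_BCD (Set.prod_mono subset_rfl sP) (Set.prod_mono subset_rfl sQ)]
  have m1a := mix E (oEmpty r) A B (oUnion C D) (oDisj_empty_left _) (oDisj_empty_left _)
    (oDisj_empty_left _) hAB dA_CD dB_CD
  rw [oUnion_empty_left A, oUnion_empty_left B, Simg_empty_left E h0 hA] at m1a
  have m1b := mix E A (oEmpty r) B (oUnion C D) (oDisj_empty_right _) hAB dA_CD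
    (oDisj_empty_left _) (oDisj_empty_left _) dB_CD
  rw [oUnion_empty_right A, oUnion_empty_left (oUnion C D), Simg_empty_right E h0 hA] at m1b
  have m2a := mix E (oEmpty r) A C (oUnion B D) (oDisj_empty_left _) (oDisj_empty_left _)
    (oDisj_empty_left _) hAC dA_BD dC_BD
  rw [oUnion_empty_left A, oUnion_empty_left C, Simg_empty_left E h0 hA, eQ] at m2a
  have m2b := mix E A (oEmpty r) C (oUnion B D) (oDisj_empty_right _) hAC dA_BD
    (oDisj_empty_left _) (oDisj_empty_left _) dC_BD
  rw [oUnion_empty_right A, oUnion_empty_left (oUnion B D), Simg_empty_right E h0 hA,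
    eQ] at m2b
  have m3a := mix E (oEmpty r) A D (oUnion B C) (oDisj_empty_left _) (oDisj_empty_left _)
    (oDisj_empty_left _) hAD dA_BC dD_BC
  rw [oUnion_empty_left A, oUnion_empty_left D, Simg_empty_left E h0 hA, eR] at m3a
  have m3b := mix E A (oEmpty r) D (oUnion B C) (oDisj_empty_right _) hAD dA_BC
    (oDisj_empty_left _) (oDisj_empty_left _) dD_BC
  rw [oUnion_empty_right A, oUnion_empty_left (oUnion B C), Simg_empty_right E h0 hA,
    eR] at m3b
  rw [Jset]
  ext x
  constructor
  · rintro ⟨⟨hx1, hx2⟩, hx3⟩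
    have w1 : x ∈ Simg F E A (oUnion B (oUnion C D)) ∩ Simg F E B (oUnion A (oUnion C D)) := by
      rw [m1a]; exact hx1
    have w2 : x ∈ Simg F E A (oUnion B (oUnion C D)) ∩ Simg F E (oUnion A B) (oUnion C D) := by
      rw [m1b]; exact hx1
    have w3 : x ∈ Simg F E A (oUnion B (oUnion C D)) ∩ Simg F E C (oUnion A (oUnion B D)) := by
      rw [m2a]; exact hx2
    have w4 : x ∈ Simg F E A (oUnion B (oUnion C D)) ∩ Simg F E (oUnion A C) (oUnion B D) := by
      rw [m2b]; exact hx2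
    have w5 : x ∈ Simg F E A (oUnion B (oUnion C D)) ∩ Simg F E D (oUnion A (oUnion B C)) := by
      rw [m3a]; exact hx3
    have w6 : x ∈ Simg F E A (oUnion B (oUnion C D)) ∩ Simg F E (oUnion A D) (oUnion B C) := by
      rw [m3b]; exact hx3
    exact ⟨⟨⟨⟨⟨⟨w1.1, w1.2⟩, w3.2⟩, w5.2⟩, w2.2⟩, w4.2⟩, w6.2⟩
  · intro hx
    refine ⟨⟨?_, ?_⟩, ?_⟩
    · rw [← m1a]; exact ⟨hx.1.1.1.1.1.1, hx.1.1.1.1.1.2⟩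
    · rw [← m2a]; exact ⟨hx.1.1.1.1.1.1, hx.1.1.1.1.2⟩
    · rw [← m3a]; exact ⟨hx.1.1.1.1.1.1, hx.1.1.1.2⟩

end Aux4

section Aux5

variable {r : ℕ} {F : Species r}

lemma L22 (E : CompOp F) (A B C D : Obj r) (hAB : oDisj A B) (hAC : oDisj A C)
    (hAD : oDisj A D) (hBC : oDisj B C) (hBD : oDisj B D) (hCD : oDisj C D)
    (h0 : (F.obj (oEmpty r)).Nonempty) (hA : (F.obj A).Nonempty)
    (hB : (F.obj B).Nonempty) (hC : (F.obj C).Nonempty) (hD : (F.obj D).Nonempty) :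
    E.η (oUnion A B) (oUnion C D) '' (Simg F E A B ×ˢ Simg F E C D) =
      Jset F E A B C D := by
  have nAB := ne_union E hAB hA hB
  have nCD := ne_union E hCD hC hD
  have dB_CD : oDisj B (oUnion C D) := oDisj_union_right hBC hBD
  have dA_CD : oDisj A (oUnion C D) := oDisj_union_right hAC hAD
  have dAB_C : oDisj (oUnion A B) C := oDisj_union_left hAC hBC
  have dAB_D : oDisj (oUnion A B) D := oDisj_union_left hAD hBD
  have h1 := mix E A B C D hAB hAC hAD hBC hBD hCD
  have h2 := mix E A B D C hAB hAD hAC hBD hBC (oDisj_symm hCD)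
  rw [oUnion_comm D C, Scomm E (oDisj_symm hCD) h0 hD hC] at h2
  have h3 := mix E B A (oUnion C D) (oEmpty r) (oDisj_symm hAB) dB_CD
    (oDisj_empty_right _) dA_CD (oDisj_empty_right _) (oDisj_empty_right _)
  rw [oUnion_empty_right (oUnion C D), oUnion_empty_right A, oUnion_comm B A,
    Scomm E (oDisj_symm hAB) h0 hB hA, Simg_empty_right E h0 nCD] at h3
  have h4 := mix E A B (oUnion C D) (oEmpty r) hAB dA_CD (oDisj_empty_right _)
    dB_CD (oDisj_empty_right _) (oDisj_empty_right _)
  rw [oUnion_empty_right (oUnion C D), oUnion_empty_right B,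
    Simg_empty_right E h0 nCD] at h4
  have h5 := mix E (oEmpty r) (oUnion A B) C D (oDisj_empty_left _) (oDisj_empty_left _)
    (oDisj_empty_left _) dAB_C dAB_D hCD
  rw [oUnion_empty_left (oUnion A B), oUnion_empty_left C,
    Simg_empty_left E h0 nAB] at h5
  have h6 := mix E (oEmpty r) (oUnion A B) D C (oDisj_empty_left _) (oDisj_empty_left _)
    (oDisj_empty_left _) dAB_D dAB_C (oDisj_symm hCD)
  rw [oUnion_empty_left (oUnion A B), oUnion_empty_left D, Simg_empty_left E h0 nAB,
    oUnion_comm D C, Scomm E (oDisj_symm hCD) h0 hD hC] at h6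
  have monoCD : E.η (oUnion A B) (oUnion C D) '' (Simg F E A B ×ˢ Simg F E C D) ⊆
      E.η (oUnion A B) (oUnion C D) ''
        (Simg F E A B ×ˢ (F.obj (oUnion C D) : Set ℕ)) :=
    Set.image_mono (Set.prod_mono subset_rfl (Simg_sub E hCD))
  have monoAB : E.η (oUnion A B) (oUnion C D) '' (Simg F E A B ×ˢ Simg F E C D) ⊆
      E.η (oUnion A B) (oUnion C D) ''
        ((F.obj (oUnion A B) : Set ℕ) ×ˢ Simg F E C D) :=
    Set.image_mono (Set.prod_mono (Simg_sub E hAB) subset_rfl)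
  have cA : Simg F E (oUnion B (oUnion C D)) A = Simg F E A (oUnion B (oUnion C D)) :=
    Scomm E (oDisj_union_left (oDisj_symm hAB) (oDisj_symm dA_CD)) h0
      (ne_union E dB_CD hB nCD) hA
  have cB : Simg F E (oUnion A (oUnion C D)) B = Simg F E B (oUnion A (oUnion C D)) :=
    Scomm E (oDisj_union_left hAB (oDisj_symm dB_CD)) h0
      (ne_union E dA_CD hA nCD) hB
  rw [cA] at h3
  rw [cB] at h4
  rw [oUnion_assoc A B D] at h5
  rw [oUnion_assoc A B C] at h6
  rw [Jset]
  ext x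
  constructor
  · intro hx
    have m1 : x ∈ Simg F E (oUnion A B) (oUnion C D) ∩
        Simg F E (oUnion A C) (oUnion B D) := by rw [h1]; exact hx
    have m2 : x ∈ Simg F E (oUnion A B) (oUnion C D) ∩
        Simg F E (oUnion A D) (oUnion B C) := by rw [h2]; exact hx
    have m3 : x ∈ Simg F E (oUnion A B) (oUnion C D) ∩
        Simg F E A (oUnion B (oUnion C D)) := by rw [h3]; exact monoCD hx
    have m4 : x ∈ Simg F E (oUnion A B) (oUnion C D) ∩
        Simg F E B (oUnion A (oUnion C D)) := by rw [h4]; exact monoCD hx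
    have m5 : x ∈ Simg F E (oUnion A B) (oUnion C D) ∩
        Simg F E C (oUnion A (oUnion B D)) := by rw [h5]; exact monoAB hx
    have m6 : x ∈ Simg F E (oUnion A B) (oUnion C D) ∩
        Simg F E D (oUnion A (oUnion B C)) := by rw [h6]; exact monoAB hx
    exact ⟨⟨⟨⟨⟨⟨m3.2, m4.2⟩, m5.2⟩, m6.2⟩, m1.1⟩, m1.2⟩, m2.2⟩
  · intro hx
    rw [← h1]
    exact ⟨hx.1.1.2, hx.1.2⟩

lemma L31 (E : CompOp F) (A B C D : Obj r) (hAB : oDisj A B) (hAC : oDisj A C)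
    (hAD : oDisj A D) (hBC : oDisj B C) (hBD : oDisj B D) (hCD : oDisj C D)
    (h0 : (F.obj (oEmpty r)).Nonempty) (hA : (F.obj A).Nonempty)
    (hB : (F.obj B).Nonempty) (hC : (F.obj C).Nonempty) (hD : (F.obj D).Nonempty) :
    E.η (oUnion A (oUnion B C)) D '' (Tset F E A B C ×ˢ (F.obj D : Set ℕ)) =
      Jset F E A B C D := by
  have nAB := ne_union E hAB hA hB
  have nAC := ne_union E hAC hA hC
  have nBC := ne_union E hBC hB hC
  have dA_BC : oDisj A (oUnion B C) := oDisj_union_right hAB hAC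
  have dB_AC : oDisj B (oUnion A C) := oDisj_union_right (oDisj_symm hAB) hBC
  have dC_AB : oDisj C (oUnion A B) := oDisj_union_right (oDisj_symm hAC) (oDisj_symm hBC)
  have dBC_D : oDisj (oUnion B C) D := oDisj_union_left hBD hCD
  have dAC_D : oDisj (oUnion A C) D := oDisj_union_left hAD hCD
  have dAB_D : oDisj (oUnion A B) D := oDisj_union_left hAD hBD
  have dABC_D : oDisj (oUnion A (oUnion B C)) D := oDisj_union_left hAD dBC_D
  have nABC : (F.obj (oUnion A (oUnion B C))).Nonempty := ne_union E dA_BC hA nBC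
  have eQ : oUnion B (oUnion A C) = oUnion A (oUnion B C) := by
    funext i; ext a; simp only [oUnion, Finset.mem_union]; tauto
  have eR : oUnion C (oUnion A B) = oUnion A (oUnion B C) := by
    funext i; ext a; simp only [oUnion, Finset.mem_union]; tauto
  have eBCA : oUnion (oUnion B C) A = oUnion A (oUnion B C) := by
    funext i; ext a; simp only [oUnion, Finset.mem_union]; tauto
  have eACB : oUnion (oUnion A C) B = oUnion A (oUnion B C) := by
    funext i; ext a; simp only [oUnion, Finset.mem_union]; tauto
  have eABC : oUnion (oUnion A B) C = oUnion A (oUnion B C) := by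
    funext i; ext a; simp only [oUnion, Finset.mem_union]; tauto
  have eBCD : oUnion (oUnion B C) D = oUnion B (oUnion C D) := by
    funext i; ext a; simp only [oUnion, Finset.mem_union]; tauto
  have eACD : oUnion (oUnion A C) D = oUnion A (oUnion C D) := by
    funext i; ext a; simp only [oUnion, Finset.mem_union]; tauto
  have eABD : oUnion (oUnion A B) D = oUnion A (oUnion B D) := by
    funext i; ext a; simp only [oUnion, Finset.mem_union]; tauto
  have cTop : Simg F E (oUnion A (oUnion B C)) D = Simg F E D (oUnion A (oUnion B C)) :=
    Scomm E dABC_D h0 nABC hD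
  have sP : Simg F E A (oUnion B C) ⊆ (F.obj (oUnion A (oUnion B C)) : Set ℕ) :=
    Simg_sub E dA_BC
  have sQ : Simg F E B (oUnion A C) ⊆ (F.obj (oUnion A (oUnion B C)) : Set ℕ) := by
    have := Simg_sub E dB_AC; rwa [eQ] at this
  have sR : Simg F E C (oUnion A B) ⊆ (F.obj (oUnion A (oUnion B C)) : Set ℕ) := by
    have := Simg_sub E dC_AB; rwa [eR] at this
  rw [Tset, prod_inter_left, prod_inter_left,
    img_inter E dABC_D
      (Set.inter_subset_left.trans (Set.prod_mono sP subset_rfl))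
      (Set.prod_mono sR subset_rfl),
    img_inter E dABC_D (Set.prod_mono sP subset_rfl) (Set.prod_mono sQ subset_rfl)]
  -- Y₁
  have y1a := mix E A (oUnion B C) D (oEmpty r) dA_BC hAD (oDisj_empty_right _)
    dBC_D (oDisj_empty_right _) (oDisj_empty_right _)
  rw [oUnion_empty_right D, oUnion_empty_right (oUnion B C), Simg_empty_right E h0 hD,
    cTop] at y1a
  have y1b := mix E (oUnion B C) A D (oEmpty r) (oDisj_symm dA_BC) dBC_D
    (oDisj_empty_right _) hAD (oDisj_empty_right _) (oDisj_empty_right _)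
  rw [oUnion_empty_right D, oUnion_empty_right A, Simg_empty_right E h0 hD, eBCA,
    Scomm E (oDisj_symm dA_BC) h0 nBC hA, cTop,
    Scomm E (oDisj_union_left (oDisj_symm dA_BC) (oDisj_symm hAD)) h0
      (ne_union E dBC_D nBC hD) hA, eBCD] at y1b
  -- Y₂
  have y2a := mix E B (oUnion A C) D (oEmpty r) dB_AC hBD (oDisj_empty_right _)
    dAC_D (oDisj_empty_right _) (oDisj_empty_right _)
  rw [oUnion_empty_right D, oUnion_empty_right (oUnion A C), Simg_empty_right E h0 hD,
    eQ, cTop,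
    Scomm E (oDisj_union_left dB_AC (oDisj_union_right (oDisj_symm hAD) (oDisj_symm hCD)))
      h0 (ne_union E hBD hB hD) nAC] at y2a
  have y2b := mix E (oUnion A C) B D (oEmpty r) (oDisj_symm dB_AC) dAC_D
    (oDisj_empty_right _) hBD (oDisj_empty_right _) (oDisj_empty_right _)
  rw [oUnion_empty_right D, oUnion_empty_right B, Simg_empty_right E h0 hD, eACB,
    Scomm E (oDisj_symm dB_AC) h0 nAC hB, cTop,
    Scomm E (oDisj_union_left (oDisj_symm dB_AC) (oDisj_symm hBD)) h0
      (ne_union E dAC_D nAC hD) hB, eACD] at y2b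
  -- Y₃
  have y3a := mix E C (oUnion A B) D (oEmpty r) dC_AB hCD (oDisj_empty_right _)
    dAB_D (oDisj_empty_right _) (oDisj_empty_right _)
  rw [oUnion_empty_right D, oUnion_empty_right (oUnion A B), Simg_empty_right E h0 hD,
    eR, cTop,
    Scomm E (oDisj_union_left dC_AB (oDisj_union_right (oDisj_symm hAD) (oDisj_symm hBD)))
      h0 (ne_union E hCD hC hD) nAB] at y3a
  have y3b := mix E (oUnion A B) C D (oEmpty r) (oDisj_symm dC_AB) dAB_D
    (oDisj_empty_right _) hCD (oDisj_empty_right _) (oDisj_empty_right _)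
  rw [oUnion_empty_right D, oUnion_empty_right C, Simg_empty_right E h0 hD, eABC,
    Scomm E (oDisj_symm dC_AB) h0 nAB hC, cTop,
    Scomm E (oDisj_union_left (oDisj_symm dC_AB) (oDisj_symm hCD)) h0
      (ne_union E dAB_D nAB hD) hC, eABD] at y3b
  rw [Jset]
  ext x
  constructor
  · rintro ⟨⟨hx1, hx2⟩, hx3⟩
    have w1 : x ∈ Simg F E D (oUnion A (oUnion B C)) ∩
        Simg F E (oUnion A D) (oUnion B C) := by rw [y1a]; exact hx1
    have w2 : x ∈ Simg F E D (oUnion A (oUnion B C)) ∩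
        Simg F E A (oUnion B (oUnion C D)) := by rw [y1b]; exact hx1
    have w3 : x ∈ Simg F E D (oUnion A (oUnion B C)) ∩
        Simg F E (oUnion A C) (oUnion B D) := by rw [y2a]; exact hx2
    have w4 : x ∈ Simg F E D (oUnion A (oUnion B C)) ∩
        Simg F E B (oUnion A (oUnion C D)) := by rw [y2b]; exact hx2
    have w5 : x ∈ Simg F E D (oUnion A (oUnion B C)) ∩
        Simg F E (oUnion A B) (oUnion C D) := by rw [y3a]; exact hx3
    have w6 : x ∈ Simg F E D (oUnion A (oUnion B C)) ∩
        Simg F E C (oUnion A (oUnion B D)) := by rw [y3b]; exact hx3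
    exact ⟨⟨⟨⟨⟨⟨w2.2, w4.2⟩, w6.2⟩, w1.1⟩, w5.2⟩, w3.2⟩, w1.2⟩
  · intro hx
    refine ⟨⟨?_, ?_⟩, ?_⟩
    · rw [← y1a]; exact ⟨hx.1.1.1.2, hx.2⟩
    · rw [← y2a]; exact ⟨hx.1.1.1.2, hx.1.2⟩
    · rw [← y3a]; exact ⟨hx.1.1.1.2, hx.1.1.2⟩

end Aux5

section Aux6

variable {r : ℕ} {F : Species r}

lemma bigU_singleton (Ωs : Fin 4 → Obj r) (a : Fin 4) : bigU Ωs {a} = Ωs a := by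
  funext i; simp [bigU]

lemma bigU_pair (Ωs : Fin 4 → Obj r) (a b : Fin 4) :
    bigU Ωs {a, b} = oUnion (Ωs a) (Ωs b) := by
  funext i; simp [bigU, oUnion, Finset.biUnion_insert]

lemma bigU_triple (Ωs : Fin 4 → Obj r) (a b c : Fin 4) :
    bigU Ωs {a, b, c} = oUnion (Ωs a) (oUnion (Ωs b) (Ωs c)) := by
  funext i; simp [bigU, oUnion, Finset.biUnion_insert]

lemma disj_bigU (Ωs : Fin 4 → Obj r) (hd : ∀ i j, i ≠ j → oDisj (Ωs i) (Ωs j))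
    {I J : Finset (Fin 4)} (hIJ : Disjoint I J) :
    oDisj (bigU Ωs I) (bigU Ωs J) := by
  intro i
  rw [Finset.disjoint_left]
  intro a ha hb
  simp only [bigU] at ha hb
  obtain ⟨j, hj, haj⟩ := Finset.mem_biUnion.mp ha
  obtain ⟨k, hk, hak⟩ := Finset.mem_biUnion.mp hb
  exact Finset.disjoint_left.mp
    (hd j k (fun h => Finset.disjoint_left.mp hIJ hj (h ▸ hk)) i) haj hak

lemma ne_bigU (E : CompOp F) (Ωs : Fin 4 → Obj r)
    (hd : ∀ i j, i ≠ j → oDisj (Ωs i) (Ωs j))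
    (h0 : (F.obj (oEmpty r)).Nonempty) (hne : ∀ i, (F.obj (Ωs i)).Nonempty)
    (I : Finset (Fin 4)) : (F.obj (bigU Ωs I)).Nonempty := by
  induction I using Finset.induction_on with
  | empty =>
    rw [show bigU Ωs (∅ : Finset (Fin 4)) = oEmpty r from
      funext fun i => by simp [bigU, oEmpty]]
    exact h0
  | @insert a I' ha ih =>
    rw [show bigU Ωs (insert a I') = oUnion (Ωs a) (bigU Ωs I') from
      funext fun i => by simp [bigU, oUnion, Finset.biUnion_insert]]
    have hdisj : oDisj (Ωs a) (bigU Ωs I') := by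
      have := disj_bigU Ωs hd (I := {a}) (J := I')
        (Finset.disjoint_singleton_left.mpr ha)
      rwa [bigU_singleton] at this
    exact ne_union E hdisj (hne a) ih

/-- The normal form of a split set, indexed by a subset of `Fin 4`. -/
def NS (F : Species r) (E : CompOp F) (Ωs : Fin 4 → Obj r) (I : Finset (Fin 4)) :
    Set ℕ :=
  Simg F E (bigU Ωs I) (bigU Ωs Iᶜ)

lemma NS_compl (E : CompOp F) (Ωs : Fin 4 → Obj r)
    (hd : ∀ i j, i ≠ j → oDisj (Ωs i) (Ωs j))
    (h0 : (F.obj (oEmpty r)).Nonempty) (hne : ∀ i, (F.obj (Ωs i)).Nonempty)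
    (I : Finset (Fin 4)) : NS F E Ωs Iᶜ = NS F E Ωs I := by
  rw [NS, NS, compl_compl]
  exact Scomm E (disj_bigU Ωs hd disjoint_compl_left) h0
    (ne_bigU E Ωs hd h0 hne _) (ne_bigU E Ωs hd h0 hne _)

/-- Intersection of normal-form split sets over a list of subsets. -/
def NSL (F : Species r) (E : CompOp F) (Ωs : Fin 4 → Obj r) :
    List (Finset (Fin 4)) → Set ℕ
  | [] => Set.univ
  | I :: L => NS F E Ωs I ∩ NSL F E Ωs L

lemma NSL_mem (E : CompOp F) (Ωs : Fin 4 → Obj r) {v : ℕ}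
    {L : List (Finset (Fin 4))} :
    v ∈ NSL F E Ωs L ↔ ∀ I ∈ L, v ∈ NS F E Ωs I := by
  induction L with
  | nil => simp [NSL]
  | cons I L ih => simp [NSL, ih]

lemma NSL_anti (E : CompOp F) (Ωs : Fin 4 → Obj r)
    (hd : ∀ i j, i ≠ j → oDisj (Ωs i) (Ωs j))
    (h0 : (F.obj (oEmpty r)).Nonempty) (hne : ∀ i, (F.obj (Ωs i)).Nonempty)
    {L1 L2 : List (Finset (Fin 4))}
    (h : ∀ I ∈ L1, ∃ J ∈ L2, I = J ∨ I = Jᶜ) :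
    NSL F E Ωs L2 ⊆ NSL F E Ωs L1 := by
  intro v hv
  rw [NSL_mem E Ωs] at hv ⊢
  intro I hI
  obtain ⟨J, hJ, hc⟩ := h I hI
  have e : NS F E Ωs I = NS F E Ωs J := by
    rcases hc with rfl | rfl
    · rfl
    · exact NS_compl E Ωs hd h0 hne J
  rw [e]; exact hv J hJ

lemma dec4 : ∀ x y z w : Fin 4, x ≠ y → x ≠ z → x ≠ w → y ≠ z → y ≠ w → z ≠ w →
    (({x} : Finset (Fin 4))ᶜ = {y, z, w} ∧ ({y} : Finset (Fin 4))ᶜ = {x, z, w} ∧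
     ({z} : Finset (Fin 4))ᶜ = {x, y, w} ∧ ({w} : Finset (Fin 4))ᶜ = {x, y, z} ∧
     ({x, y} : Finset (Fin 4))ᶜ = {z, w} ∧ ({x, z} : Finset (Fin 4))ᶜ = {y, w} ∧
     ({x, w} : Finset (Fin 4))ᶜ = {y, z}) := by decide

lemma sing_cases : ∀ v : Fin 4, ({v} : Finset (Fin 4)) = {0} ∨
    ({v} : Finset (Fin 4)) = {1} ∨ ({v} : Finset (Fin 4)) = {2} ∨
    ({v} : Finset (Fin 4)) = {3} := by decide

lemma pair_cases : ∀ a b : Fin 4, a ≠ b →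
    ({a, b} : Finset (Fin 4)) = {0, 1} ∨ ({a, b} : Finset (Fin 4)) = {0, 2} ∨
    ({a, b} : Finset (Fin 4)) = {0, 3} ∨
    ({a, b} : Finset (Fin 4)) = ({0, 1} : Finset (Fin 4))ᶜ ∨
    ({a, b} : Finset (Fin 4)) = ({0, 2} : Finset (Fin 4))ᶜ ∨
    ({a, b} : Finset (Fin 4)) = ({0, 3} : Finset (Fin 4))ᶜ := by decide

lemma cover_sing : ∀ x y z w : Fin 4, x ≠ y → x ≠ z → x ≠ w → y ≠ z → y ≠ w →
    z ≠ w → ∀ v : Fin 4, ({v} : Finset (Fin 4)) = {x} ∨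
    ({v} : Finset (Fin 4)) = {y} ∨ ({v} : Finset (Fin 4)) = {z} ∨
    ({v} : Finset (Fin 4)) = {w} := by decide

lemma cover_pair : ∀ x y z w : Fin 4, x ≠ y → x ≠ z → x ≠ w → y ≠ z → y ≠ w →
    z ≠ w → ∀ a b : Fin 4, a ≠ b →
    ({a, b} : Finset (Fin 4)) = {x, y} ∨ ({a, b} : Finset (Fin 4)) = {x, z} ∨
    ({a, b} : Finset (Fin 4)) = {x, w} ∨
    ({a, b} : Finset (Fin 4)) = ({x, y} : Finset (Fin 4))ᶜ ∨
    ({a, b} : Finset (Fin 4)) = ({x, z} : Finset (Fin 4))ᶜ ∨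
    ({a, b} : Finset (Fin 4)) = ({x, w} : Finset (Fin 4))ᶜ := by decide

lemma Jset_NS (E : CompOp F) (Ωs : Fin 4 → Obj r) (x y z w : Fin 4)
    (hxy : x ≠ y) (hxz : x ≠ z) (hxw : x ≠ w) (hyz : y ≠ z) (hyw : y ≠ w)
    (hzw : z ≠ w) :
    Jset F E (Ωs x) (Ωs y) (Ωs z) (Ωs w) =
      NSL F E Ωs [{x}, {y}, {z}, {w}, {x, y}, {x, z}, {x, w}] := by
  obtain ⟨c1, c2, c3, c4, c5, c6, c7⟩ := dec4 x y z w hxy hxz hxw hyz hyw hzw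
  have n1 : NS F E Ωs {x} =
      Simg F E (Ωs x) (oUnion (Ωs y) (oUnion (Ωs z) (Ωs w))) := by
    rw [NS, c1, bigU_singleton, bigU_triple]
  have n2 : NS F E Ωs {y} =
      Simg F E (Ωs y) (oUnion (Ωs x) (oUnion (Ωs z) (Ωs w))) := by
    rw [NS, c2, bigU_singleton, bigU_triple]
  have n3 : NS F E Ωs {z} =
      Simg F E (Ωs z) (oUnion (Ωs x) (oUnion (Ωs y) (Ωs w))) := by
    rw [NS, c3, bigU_singleton, bigU_triple]
  have n4 : NS F E Ωs {w} =
      Simg F E (Ωs w) (oUnion (Ωs x) (oUnion (Ωs y) (Ωs z))) := by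
    rw [NS, c4, bigU_singleton, bigU_triple]
  have n5 : NS F E Ωs {x, y} =
      Simg F E (oUnion (Ωs x) (Ωs y)) (oUnion (Ωs z) (Ωs w)) := by
    rw [NS, c5, bigU_pair, bigU_pair]
  have n6 : NS F E Ωs {x, z} =
      Simg F E (oUnion (Ωs x) (Ωs z)) (oUnion (Ωs y) (Ωs w)) := by
    rw [NS, c6, bigU_pair, bigU_pair]
  have n7 : NS F E Ωs {x, w} =
      Simg F E (oUnion (Ωs x) (Ωs w)) (oUnion (Ωs y) (Ωs z)) := by
    rw [NS, c7, bigU_pair, bigU_pair]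
  rw [Jset]
  show _ = NS F E Ωs {x} ∩ (NS F E Ωs {y} ∩ (NS F E Ωs {z} ∩ (NS F E Ωs {w} ∩
    (NS F E Ωs {x, y} ∩ (NS F E Ωs {x, z} ∩ (NS F E Ωs {x, w} ∩ Set.univ))))))
  rw [n1, n2, n3, n4, n5, n6, n7]
  ext v
  simp only [Set.mem_inter_iff, Set.mem_univ, and_true]
  tauto

lemma Jperm (E : CompOp F) (Ωs : Fin 4 → Obj r)
    (hd : ∀ i j, i ≠ j → oDisj (Ωs i) (Ωs j))
    (h0 : (F.obj (oEmpty r)).Nonempty) (hne : ∀ i, (F.obj (Ωs i)).Nonempty)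
    (x y z w : Fin 4) (hxy : x ≠ y) (hxz : x ≠ z) (hxw : x ≠ w) (hyz : y ≠ z)
    (hyw : y ≠ w) (hzw : z ≠ w) :
    Jset F E (Ωs x) (Ωs y) (Ωs z) (Ωs w) =
      Jset F E (Ωs 0) (Ωs 1) (Ωs 2) (Ωs 3) := by
  rw [Jset_NS E Ωs x y z w hxy hxz hxw hyz hyw hzw,
    Jset_NS E Ωs 0 1 2 3 (by decide) (by decide) (by decide) (by decide) (by decide)
      (by decide)]
  have hc1 : ∀ I ∈ ([{x}, {y}, {z}, {w}, {x, y}, {x, z}, {x, w}] :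
      List (Finset (Fin 4))),
      ∃ J ∈ ([{0}, {1}, {2}, {3}, {0, 1}, {0, 2}, {0, 3}] : List (Finset (Fin 4))),
        I = J ∨ I = Jᶜ := by
    have hsJ : ∀ v : Fin 4,
        ∃ J ∈ ([{0}, {1}, {2}, {3}, {0, 1}, {0, 2}, {0, 3}] : List (Finset (Fin 4))),
          ({v} : Finset (Fin 4)) = J ∨ ({v} : Finset (Fin 4)) = Jᶜ := by
      intro v
      rcases sing_cases v with h | h | h | h
      exacts [⟨{0}, by simp, Or.inl h⟩, ⟨{1}, by simp, Or.inl h⟩,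
        ⟨{2}, by simp, Or.inl h⟩, ⟨{3}, by simp, Or.inl h⟩]
    have hpJ : ∀ a b : Fin 4, a ≠ b →
        ∃ J ∈ ([{0}, {1}, {2}, {3}, {0, 1}, {0, 2}, {0, 3}] : List (Finset (Fin 4))),
          ({a, b} : Finset (Fin 4)) = J ∨ ({a, b} : Finset (Fin 4)) = Jᶜ := by
      intro a b hab
      rcases pair_cases a b hab with h | h | h | h | h | h
      exacts [⟨{0, 1}, by simp, Or.inl h⟩, ⟨{0, 2}, by simp, Or.inl h⟩,
        ⟨{0, 3}, by simp, Or.inl h⟩, ⟨{0, 1}, by simp, Or.inr h⟩,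
        ⟨{0, 2}, by simp, Or.inr h⟩, ⟨{0, 3}, by simp, Or.inr h⟩]
    intro I hI
    simp only [List.mem_cons, List.not_mem_nil, or_false] at hI
    rcases hI with rfl | rfl | rfl | rfl | rfl | rfl | rfl
    exacts [hsJ x, hsJ y, hsJ z, hsJ w, hpJ x y hxy, hpJ x z hxz, hpJ x w hxw]
  have hc2 : ∀ J ∈ ([{0}, {1}, {2}, {3}, {0, 1}, {0, 2}, {0, 3}] :
      List (Finset (Fin 4))),
      ∃ I ∈ ([{x}, {y}, {z}, {w}, {x, y}, {x, z}, {x, w}] : List (Finset (Fin 4))),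
        J = I ∨ J = Iᶜ := by
    have hsI : ∀ v : Fin 4,
        ∃ I ∈ ([{x}, {y}, {z}, {w}, {x, y}, {x, z}, {x, w}] : List (Finset (Fin 4))),
          ({v} : Finset (Fin 4)) = I ∨ ({v} : Finset (Fin 4)) = Iᶜ := by
      intro v
      rcases cover_sing x y z w hxy hxz hxw hyz hyw hzw v with h | h | h | h
      exacts [⟨{x}, by simp, Or.inl h⟩, ⟨{y}, by simp, Or.inl h⟩,
        ⟨{z}, by simp, Or.inl h⟩, ⟨{w}, by simp, Or.inl h⟩]
    have hpI : ∀ a b : Fin 4, a ≠ b →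
        ∃ I ∈ ([{x}, {y}, {z}, {w}, {x, y}, {x, z}, {x, w}] : List (Finset (Fin 4))),
          ({a, b} : Finset (Fin 4)) = I ∨ ({a, b} : Finset (Fin 4)) = Iᶜ := by
      intro a b hab
      rcases cover_pair x y z w hxy hxz hxw hyz hyw hzw a b hab with h | h | h | h | h | h
      exacts [⟨{x, y}, by simp, Or.inl h⟩, ⟨{x, z}, by simp, Or.inl h⟩,
        ⟨{x, w}, by simp, Or.inl h⟩, ⟨{x, y}, by simp, Or.inr h⟩,
        ⟨{x, z}, by simp, Or.inr h⟩, ⟨{x, w}, by simp, Or.inr h⟩]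
    intro J hJ
    simp only [List.mem_cons, List.not_mem_nil, or_false] at hJ
    rcases hJ with rfl | rfl | rfl | rfl | rfl | rfl | rfl
    exacts [hsI 0, hsI 1, hsI 2, hsI 3, hpI 0 1 (by decide), hpI 0 2 (by decide),
      hpI 0 3 (by decide)]
  exact Set.Subset.antisymm (NSL_anti E Ωs hd h0 hne hc2) (NSL_anti E Ωs hd h0 hne hc1)

lemma Tswap1 (E : CompOp F) (A B C : Obj r) : Tset F E A B C = Tset F E B A C := by
  rw [Tset, Tset, oUnion_comm B A]
  ext v; simp only [Set.mem_inter_iff]; tauto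

lemma Tswap2 (E : CompOp F) (A B C : Obj r) : Tset F E A B C = Tset F E A C B := by
  rw [Tset, Tset, oUnion_comm C B]
  ext v; simp only [Set.mem_inter_iff]; tauto

lemma Tcyc (E : CompOp F) (A B C : Obj r) : Tset F E A B C = Tset F E C A B := by
  rw [Tset, Tset, oUnion_comm C B, oUnion_comm C A]
  ext v; simp only [Set.mem_inter_iff]; tauto

lemma dec3 : ∀ x y z a b c : Fin 4, x ≠ y → x ≠ z → y ≠ z →
    ({x, y, z} : Finset (Fin 4)) = {a, b, c} →
    (x = a ∧ y = b ∧ z = c) ∨ (x = a ∧ y = c ∧ z = b) ∨ (x = b ∧ y = a ∧ z = c) ∨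
    (x = b ∧ y = c ∧ z = a) ∨ (x = c ∧ y = a ∧ z = b) ∨ (x = c ∧ y = b ∧ z = a) := by
  decide

lemma Tperm (E : CompOp F) (Ωs : Fin 4 → Obj r) (x y z a b c : Fin 4)
    (hxy : x ≠ y) (hxz : x ≠ z) (hyz : y ≠ z)
    (hEq : ({x, y, z} : Finset (Fin 4)) = {a, b, c}) :
    Tset F E (Ωs x) (Ωs y) (Ωs z) = Tset F E (Ωs a) (Ωs b) (Ωs c) := by
  rcases dec3 x y z a b c hxy hxz hyz hEq with
    ⟨rfl, rfl, rfl⟩ | ⟨rfl, rfl, rfl⟩ | ⟨rfl, rfl, rfl⟩ | ⟨rfl, rfl, rfl⟩ |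
    ⟨rfl, rfl, rfl⟩ | ⟨rfl, rfl, rfl⟩
  · rfl
  · exact Tswap2 E _ _ _
  · exact Tswap1 E _ _ _
  · exact Tcyc E _ _ _
  · exact (Tcyc E _ _ _).trans (Tcyc E _ _ _)
  · exact (Tcyc E _ _ _).trans (Tswap2 E _ _ _)

lemma dec2 : ∀ x y a b : Fin 4, ({x} : Finset (Fin 4)) ∪ {y} = {a, b} → x ≠ y →
    (x = a ∧ y = b) ∨ (x = b ∧ y = a) := by decide

end Aux6

section Aux7

variable {r : ℕ} {F : Species r}

lemma brack_empty (E : CompOp F) (Ωs : Fin 4 → Obj r) {i : Fin 4}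
    (hi : F.obj (Ωs i) = ∅) {s : Finset (Fin 4)} {B : Set ℕ}
    (hB : Brack F E Ωs (fun Ω => (F.obj Ω : Set ℕ)) s B) (hmem : i ∈ s) : B = ∅ := by
  induction hB with
  | single j =>
    have : i = j := Finset.mem_singleton.mp hmem
    subst this
    simp [hi]
  | @node s t B₁ B₂ hst hs ht hb1 hb2 ih1 ih2 =>
    rcases Finset.mem_union.mp hmem with h | h
    · rw [ih1 h]; simp
    · rw [ih2 h]; simp

lemma master (E : CompOp F) (Ωs : Fin 4 → Obj r)
    (hd : ∀ i j, i ≠ j → oDisj (Ωs i) (Ωs j))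
    (h0 : (F.obj (oEmpty r)).Nonempty)
    (hne : ∀ i, (F.obj (Ωs i)).Nonempty)
    {s : Finset (Fin 4)} {B : Set ℕ}
    (hB : Brack F E Ωs (fun Ω => (F.obj Ω : Set ℕ)) s B) :
    (∀ a, s = {a} → B = (F.obj (Ωs a) : Set ℕ)) ∧
    (∀ a b, a ≠ b → s = {a, b} → B = Simg F E (Ωs a) (Ωs b)) ∧
    (∀ a b c, a ≠ b → a ≠ c → b ≠ c → s = {a, b, c} →
      B = Tset F E (Ωs a) (Ωs b) (Ωs c)) ∧
    (s = Finset.univ → B = Jset F E (Ωs 0) (Ωs 1) (Ωs 2) (Ωs 3)) := by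
  induction hB with
  | single i =>
    refine ⟨?_, ?_, ?_, ?_⟩
    · intro a h
      obtain rfl : i = a := Finset.mem_singleton.mp (h ▸ Finset.mem_singleton_self i)
      rfl
    · intro a b hab h
      exfalso
      have hc := congrArg Finset.card h
      rw [Finset.card_singleton, Finset.card_pair hab] at hc
      omega
    · intro a b c hab hac hbc h
      exfalso
      have h3 : ({a, b, c} : Finset (Fin 4)).card = 3 :=
        Finset.card_eq_three.mpr ⟨a, b, c, hab, hac, hbc, rfl⟩
      have hc := congrArg Finset.card h
      rw [Finset.card_singleton, h3] at hc
      omega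
    · intro h
      exfalso
      have hc := congrArg Finset.card h
      rw [Finset.card_singleton] at hc
      simp at hc
  | @node s t B₁ B₂ hst hs ht hb1 hb2 ih1 ih2 =>
    have hcard : s.card + t.card = (s ∪ t).card :=
      (Finset.card_union_of_disjoint hst).symm
    have hs1 := Finset.card_pos.mpr hs
    have ht1 := Finset.card_pos.mpr ht
    refine ⟨?_, ?_, ?_, ?_⟩
    · intro a h
      exfalso
      rw [h, Finset.card_singleton] at hcard
      omega
    · intro a b hab h
      rw [h, Finset.card_pair hab] at hcard
      have hsc : s.card = 1 := by omega
      have htc : t.card = 1 := by omega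
      obtain ⟨x, rfl⟩ := Finset.card_eq_one.mp hsc
      obtain ⟨y, rfl⟩ := Finset.card_eq_one.mp htc
      have hxy : x ≠ y := fun hh =>
        Finset.disjoint_left.mp hst (Finset.mem_singleton_self x)
          (by rw [hh]; exact Finset.mem_singleton_self y)
      rw [(ih1).1 x rfl, (ih2).1 y rfl, bigU_singleton, bigU_singleton]
      rcases dec2 x y a b h hxy with ⟨rfl, rfl⟩ | ⟨rfl, rfl⟩
      · rfl
      · exact Scomm E (hd x y hxy) h0 (hne x) (hne y)
    · intro a b c hab hac hbc h
      have h3 : ({a, b, c} : Finset (Fin 4)).card = 3 :=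
        Finset.card_eq_three.mpr ⟨a, b, c, hab, hac, hbc, rfl⟩
      rw [h, h3] at hcard
      have hcases : s.card = 1 ∧ t.card = 2 ∨ s.card = 2 ∧ t.card = 1 := by omega
      rcases hcases with ⟨hsc, htc⟩ | ⟨hsc, htc⟩
      · obtain ⟨x, rfl⟩ := Finset.card_eq_one.mp hsc
        obtain ⟨y, z, hyz, rfl⟩ := Finset.card_eq_two.mp htc
        have hxn : x ∉ ({y, z} : Finset (Fin 4)) :=
          Finset.disjoint_left.mp hst (Finset.mem_singleton_self x)
        have hxy : x ≠ y := fun hh => hxn (by rw [hh]; simp)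
        have hxz : x ≠ z := fun hh => hxn (by rw [hh]; simp)
        rw [(ih1).1 x rfl, (ih2).2.1 y z hyz rfl, bigU_singleton, bigU_pair]
        rw [L12 E (Ωs x) (Ωs y) (Ωs z) (hd x y hxy) (hd x z hxz) (hd y z hyz) h0
          (hne x) (hne y) (hne z)]
        refine Tperm E Ωs x y z a b c hxy hxz hyz ?_
        rw [show ({x, y, z} : Finset (Fin 4)) = {x} ∪ {y, z} from by
          ext v; simp only [Finset.mem_insert, Finset.mem_singleton,
            Finset.mem_union]; try tauto]
        exact h
      · obtain ⟨x, y, hxy, rfl⟩ := Finset.card_eq_two.mp hsc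
        obtain ⟨z, rfl⟩ := Finset.card_eq_one.mp htc
        have hzn : z ∉ ({x, y} : Finset (Fin 4)) :=
          Finset.disjoint_right.mp hst (Finset.mem_singleton_self z)
        have hxz : x ≠ z := fun hh => hzn (by rw [← hh]; simp)
        have hyz : y ≠ z := fun hh => hzn (by rw [← hh]; simp)
        rw [(ih1).2.1 x y hxy rfl, (ih2).1 z rfl, bigU_pair, bigU_singleton]
        rw [L21 E (Ωs x) (Ωs y) (Ωs z) (hd x y hxy) (hd x z hxz) (hd y z hyz) h0
          (hne x) (hne y) (hne z)]
        refine Tperm E Ωs x y z a b c hxy hxz hyz ?_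
        rw [show ({x, y, z} : Finset (Fin 4)) = {x, y} ∪ {z} from by
          ext v; simp only [Finset.mem_insert, Finset.mem_singleton,
            Finset.mem_union]; try tauto]
        exact h
    · intro h
      rw [h, show (Finset.univ : Finset (Fin 4)).card = 4 from rfl] at hcard
      have hcases : s.card = 1 ∧ t.card = 3 ∨ s.card = 2 ∧ t.card = 2 ∨
          s.card = 3 ∧ t.card = 1 := by omega
      rcases hcases with ⟨hsc, htc⟩ | ⟨hsc, htc⟩ | ⟨hsc, htc⟩
      · obtain ⟨x, rfl⟩ := Finset.card_eq_one.mp hsc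
        obtain ⟨y, z, w, hyz, hyw, hzw, rfl⟩ := Finset.card_eq_three.mp htc
        have hxn : x ∉ ({y, z, w} : Finset (Fin 4)) :=
          Finset.disjoint_left.mp hst (Finset.mem_singleton_self x)
        have hxy : x ≠ y := fun hh => hxn (by rw [hh]; simp)
        have hxz : x ≠ z := fun hh => hxn (by rw [hh]; simp)
        have hxw : x ≠ w := fun hh => hxn (by rw [hh]; simp)
        rw [(ih1).1 x rfl, (ih2).2.2.1 y z w hyz hyw hzw rfl, bigU_singleton,
          bigU_triple]
        rw [L13 E (Ωs x) (Ωs y) (Ωs z) (Ωs w) (hd x y hxy) (hd x z hxz)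
          (hd x w hxw) (hd y z hyz) (hd y w hyw) (hd z w hzw) h0 (hne x) (hne y)
          (hne z) (hne w)]
        exact Jperm E Ωs hd h0 hne x y z w hxy hxz hxw hyz hyw hzw
      · obtain ⟨x, y, hxy, rfl⟩ := Finset.card_eq_two.mp hsc
        obtain ⟨z, w, hzw, rfl⟩ := Finset.card_eq_two.mp htc
        have hxn : x ∉ ({z, w} : Finset (Fin 4)) :=
          Finset.disjoint_left.mp hst (by simp)
        have hyn : y ∉ ({z, w} : Finset (Fin 4)) :=
          Finset.disjoint_left.mp hst (by simp)
        have hxz : x ≠ z := fun hh => hxn (by rw [hh]; simp)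
        have hxw : x ≠ w := fun hh => hxn (by rw [hh]; simp)
        have hyz : y ≠ z := fun hh => hyn (by rw [hh]; simp)
        have hyw : y ≠ w := fun hh => hyn (by rw [hh]; simp)
        rw [(ih1).2.1 x y hxy rfl, (ih2).2.1 z w hzw rfl, bigU_pair, bigU_pair]
        rw [L22 E (Ωs x) (Ωs y) (Ωs z) (Ωs w) (hd x y hxy) (hd x z hxz)
          (hd x w hxw) (hd y z hyz) (hd y w hyw) (hd z w hzw) h0 (hne x) (hne y)
          (hne z) (hne w)]
        exact Jperm E Ωs hd h0 hne x y z w hxy hxz hxw hyz hyw hzw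
      · obtain ⟨x, y, z, hxy, hxz, hyz, rfl⟩ := Finset.card_eq_three.mp hsc
        obtain ⟨w, rfl⟩ := Finset.card_eq_one.mp htc
        have hwn : w ∉ ({x, y, z} : Finset (Fin 4)) :=
          Finset.disjoint_right.mp hst (Finset.mem_singleton_self w)
        have hxw : x ≠ w := fun hh => hwn (by rw [← hh]; simp)
        have hyw : y ≠ w := fun hh => hwn (by rw [← hh]; simp)
        have hzw : z ≠ w := fun hh => hwn (by rw [← hh]; simp)
        rw [(ih1).2.2.1 x y z hxy hxz hyz rfl, (ih2).1 w rfl, bigU_triple,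
          bigU_singleton]
        rw [L31 E (Ωs x) (Ωs y) (Ωs z) (Ωs w) (hd x y hxy) (hd x z hxz)
          (hd x w hxw) (hd y z hyz) (hd y w hyw) (hd z w hzw) h0 (hne x) (hne y)
          (hne z) (hne w)]
        exact Jperm E Ωs hd h0 hne x y z w hxy hxz hxw hyz hyw hzw

end Aux7

/-- Every `Η`-bracketing of `F[Ω₁], F[Ω₂], F[Ω₃], F[Ω₄]` equals the intersection
of the seven sets listed in the statement. -/
theorem stmt5 {r : ℕ} (hr : 0 < r) (F : Species r) (E : CompOp F)
    (hF : ∃ Ω : Obj r, (F.obj Ω).Nonempty)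
    (Ωs : Fin 4 → Obj r) (hd : ∀ i j, i ≠ j → oDisj (Ωs i) (Ωs j))
    (B : Set ℕ) (hB : Brack F E Ωs (fun Ω => (F.obj Ω : Set ℕ)) Finset.univ B) :
    B = E.η (oUnion (Ωs 0) (Ωs 1)) (oUnion (Ωs 2) (Ωs 3)) '' ((F.obj (oUnion (Ωs 0) (Ωs 1)) : Set ℕ) ×ˢ (F.obj (oUnion (Ωs 2) (Ωs 3)) : Set ℕ)) ∩
        E.η (oUnion (Ωs 0) (Ωs 2)) (oUnion (Ωs 1) (Ωs 3)) '' ((F.obj (oUnion (Ωs 0) (Ωs 2)) : Set ℕ) ×ˢ (F.obj (oUnion (Ωs 1) (Ωs 3)) : Set ℕ)) ∩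
        E.η (oUnion (Ωs 1) (Ωs 2)) (oUnion (Ωs 0) (Ωs 3)) '' ((F.obj (oUnion (Ωs 1) (Ωs 2)) : Set ℕ) ×ˢ (F.obj (oUnion (Ωs 0) (Ωs 3)) : Set ℕ)) ∩
        E.η (Ωs 0) (oUnion (oUnion (Ωs 1) (Ωs 2)) (Ωs 3)) '' ((F.obj (Ωs 0) : Set ℕ) ×ˢ (F.obj (oUnion (oUnion (Ωs 1) (Ωs 2)) (Ωs 3)) : Set ℕ)) ∩
        E.η (Ωs 1) (oUnion (oUnion (Ωs 0) (Ωs 2)) (Ωs 3)) '' ((F.obj (Ωs 1) : Set ℕ) ×ˢ (F.obj (oUnion (oUnion (Ωs 0) (Ωs 2)) (Ωs 3)) : Set ℕ)) ∩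
        E.η (Ωs 2) (oUnion (oUnion (Ωs 0) (Ωs 1)) (Ωs 3)) '' ((F.obj (Ωs 2) : Set ℕ) ×ˢ (F.obj (oUnion (oUnion (Ωs 0) (Ωs 1)) (Ωs 3)) : Set ℕ)) ∩
        E.η (Ωs 3) (oUnion (oUnion (Ωs 0) (Ωs 1)) (Ωs 2)) '' ((F.obj (Ωs 3) : Set ℕ) ×ˢ (F.obj (oUnion (oUnion (Ωs 0) (Ωs 1)) (Ωs 2)) : Set ℕ)) := by
  by_cases hall : ∀ i, (F.obj (Ωs i)).Nonempty
  · have h0 := ne_empty E hF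
    have hm := (master E Ωs hd h0 hall hB).2.2.2 rfl
    rw [hm, Jset]
    have c7 : Simg F E (oUnion (Ωs 0) (Ωs 3)) (oUnion (Ωs 1) (Ωs 2)) =
        Simg F E (oUnion (Ωs 1) (Ωs 2)) (oUnion (Ωs 0) (Ωs 3)) :=
      Scomm E
        (oDisj_union_left
          (oDisj_union_right (hd 0 1 (by decide)) (hd 0 2 (by decide)))
          (oDisj_union_right (hd 3 1 (by decide)) (hd 3 2 (by decide)))) h0
        (ne_union E (hd 0 3 (by decide)) (hall 0) (hall 3))
        (ne_union E (hd 1 2 (by decide)) (hall 1) (hall 2))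
    rw [c7, ← oUnion_assoc (Ωs 1) (Ωs 2) (Ωs 3), ← oUnion_assoc (Ωs 0) (Ωs 2) (Ωs 3),
      ← oUnion_assoc (Ωs 0) (Ωs 1) (Ωs 3), ← oUnion_assoc (Ωs 0) (Ωs 1) (Ωs 2)]
    refine Set.Subset.antisymm (fun v hv => ?_) (fun v hv => ?_)
    · exact ⟨⟨⟨⟨⟨⟨hv.1.1.2, hv.1.2⟩, hv.2⟩, hv.1.1.1.1.1.1⟩, hv.1.1.1.1.1.2⟩,
        hv.1.1.1.1.2⟩, hv.1.1.1.2⟩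
    · exact ⟨⟨⟨⟨⟨⟨hv.1.1.1.2, hv.1.1.2⟩, hv.1.2⟩, hv.2⟩, hv.1.1.1.1.1.1⟩,
        hv.1.1.1.1.1.2⟩, hv.1.1.1.1.2⟩
  · push_neg at hall
    obtain ⟨i, hi⟩ := hall
    rw [brack_empty E Ωs hi hB (Finset.mem_univ i)]
    refine (Set.eq_empty_iff_forall_notMem.mpr fun v hv => ?_).symm
    have h4 : i = 0 ∨ i = 1 ∨ i = 2 ∨ i = 3 := by fin_cases i <;> decide
    rcases h4 with rfl | rfl | rfl | rfl
    · obtain ⟨⟨p, q⟩, ⟨hp, -⟩, -⟩ := hv.1.1.1.2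
      rw [hi] at hp; simp at hp
    · obtain ⟨⟨p, q⟩, ⟨hp, -⟩, -⟩ := hv.1.1.2
      rw [hi] at hp; simp at hp
    · obtain ⟨⟨p, q⟩, ⟨hp, -⟩, -⟩ := hv.1.2
      rw [hi] at hp; simp at hp
    · obtain ⟨⟨p, q⟩, ⟨hp, -⟩, -⟩ := hv.2
      rw [hi] at hp; simp at hp

end
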